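/- Let κ⁻ : ℝ → ℝ be continuous nonnegative, τ > 0, and let b : ℝ → ℝ solve b'' - κ⁻(t) b = 0 with b(0) = 0, b'(0) = 1. Then for all t ∈ (0, τ], b(t)/t ≤ exp(∫₀^τ u κ⁻(u) du). -/

import Mathlib

/-- Monotonicity from everywhere derivative nonneg on a set. -/
lemma aux_monoOn {f f' : ℝ → ℝ} {D : Set ℝ} (hD : Convex ℝ D)
    (hf : ∀ t, HasDerivAt f (f' t) t) (h : ∀ x ∈ interior D, 0 ≤ f' x) :
    MonotoneOn f D := by
  apply monotoneOn_of_deriv_nonneg hD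
  · exact fun x _ => (hf x).continuousAt.continuousWithinAt
  · exact fun x _ => ((hf x).differentiableAt).differentiableWithinAt
  · intro x hx
    rw [(hf x).deriv]
    exact h x hx

/-- Upper bound `b(t)/t ≤ exp(∫₀^τ u κ⁻(u) du)` for solutions of `b'' - κ⁻ b = 0`,
`b(0)=0`, `b'(0)=1`. -/
theorem stmt7 (κm : ℝ → ℝ) (τ : ℝ) (b db : ℝ → ℝ)
    (hκcont : Continuous κm) (hκpos : ∀ t, 0 ≤ κm t)
    (hτ : 0 < τ)
    (hb : ∀ t, HasDerivAt b (db t) t)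
    (hdb : ∀ t, HasDerivAt db (κm t * b t) t)
    (hb0 : b 0 = 0) (hdb0 : db 0 = 1) :
    ∀ t ∈ Set.Ioc (0 : ℝ) τ,
      b t / t ≤ Real.exp (∫ u in (0 : ℝ)..τ, u * κm u) := by
  -- Step (a): p = b * db is nondecreasing on ℝ, p 0 = 0.
  have hp : ∀ t, HasDerivAt (fun t => b t * db t) (db t * db t + κm t * b t * b t) t := by
    intro t
    have := (hb t).mul (hdb t)
    exact this.congr_deriv (by ring)
  have hpmono : Monotone (fun t => b t * db t) := by
    have := aux_monoOn (f' := fun t => db t * db t + κm t * b t * b t) convex_univ hp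
      (fun x _ => by
        show 0 ≤ db x * db x + κm x * b x * b x
        nlinarith [mul_self_nonneg (db x), mul_self_nonneg (b x), hκpos x])
    exact monotoneOn_univ.mp this
  have hpnonneg : ∀ t, 0 ≤ t → 0 ≤ b t * db t := by
    intro t ht
    have := hpmono ht
    simpa [hb0] using this
  -- Step (b): db t ^ 2 ≥ 1 on [0, ∞), hence db t ≥ 1 there.
  have hq : ∀ t, HasDerivAt (fun t => db t * db t) (2 * (κm t * (b t * db t))) t := by
    intro t
    have := (hdb t).mul (hdb t)
    exact this.congr_deriv (by ring)
  have hqmono : MonotoneOn (fun t => db t * db t) (Set.Ici 0) := by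
    apply aux_monoOn (convex_Ici 0) hq
    intro x hx
    rw [interior_Ici] at hx
    have h1 := hpnonneg x (le_of_lt hx)
    have h2 := hκpos x
    nlinarith
  have hqsq : ∀ t, 0 ≤ t → 1 ≤ db t * db t := by
    intro t ht
    have := hqmono (Set.self_mem_Ici) (Set.mem_Ici.mpr ht) ht
    simpa [hdb0] using this
  have hdbpos : ∀ t, 0 ≤ t → 1 ≤ db t := by
    intro t ht
    by_contra hcon
    push_neg at hcon
    -- db t < 1, but (db t)^2 ≥ 1, so db t ≤ -1 < 0; IVT gives a zero of db.
    have hle : db t ≤ -1 := by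
      rcases le_or_gt (db t) 0 with h | h
      · nlinarith [hqsq t ht]
      · nlinarith [hqsq t ht]
    have hcont : ContinuousOn db (Set.Icc 0 t) := fun x _ => (hdb x).continuousAt.continuousWithinAt
    have h0t : (0:ℝ) ≤ t := ht
    obtain ⟨c, hc, hc0⟩ := intermediate_value_Icc' h0t hcont
      (show (0:ℝ) ∈ Set.Icc (db t) (db 0) from
        Set.mem_Icc.mpr ⟨by linarith, by rw [hdb0]; norm_num⟩)
    have := hqsq c hc.1
    rw [hc0] at this
    norm_num at this
  -- Step (c): b is nondecreasing on [0,∞), hence b ≥ 0 there.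
  have hbmono : MonotoneOn b (Set.Ici 0) := by
    apply aux_monoOn (convex_Ici 0) hb
    intro x hx
    rw [interior_Ici] at hx
    linarith [hdbpos x (le_of_lt hx)]
  have hbnonneg : ∀ t, 0 ≤ t → 0 ≤ b t := by
    intro t ht
    have := hbmono (Set.self_mem_Ici) (Set.mem_Ici.mpr ht) ht
    simpa [hb0] using this
  -- Step (d): b t ≤ t * db t on [0, ∞).
  have hh : ∀ t, HasDerivAt (fun t => t * db t - b t) (t * (κm t * b t)) t := by
    intro t
    have := ((hasDerivAt_id t).mul (hdb t)).sub (hb t)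
    simp only [id_eq] at this
    exact this.congr_deriv (by ring)
  have hhmono : MonotoneOn (fun t => t * db t - b t) (Set.Ici 0) := by
    apply aux_monoOn (convex_Ici 0) hh
    intro x hx
    rw [interior_Ici] at hx
    have h1 := hbnonneg x (le_of_lt hx)
    have h2 := hκpos x
    have h3 := le_of_lt (Set.mem_Ioi.mp hx)
    positivity
  have hbd : ∀ t, 0 ≤ t → b t ≤ t * db t := by
    intro t ht
    have := hhmono (Set.self_mem_Ici) (Set.mem_Ici.mpr ht) ht
    simp only [zero_mul, hb0, sub_zero] at this
    linarith
  -- Integral setup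
  set I : ℝ → ℝ := fun t => ∫ u in (0:ℝ)..t, u * κm u with hIdef
  have hIcont : Continuous (fun u : ℝ => u * κm u) := continuous_id.mul hκcont
  have hIderiv : ∀ t : ℝ, HasDerivAt I (t * κm t) t := by
    intro t
    exact intervalIntegral.integral_hasDerivAt_right
      (hIcont.intervalIntegrable 0 t)
      (hIcont.stronglyMeasurableAtFilter _ _)
      hIcont.continuousAt
  -- Step (e): G = db * exp(-I) is nonincreasing on [0, ∞).
  have hG : ∀ t, HasDerivAt (fun t => db t * Real.exp (-(I t)))
      (κm t * b t * Real.exp (-(I t)) + db t * (Real.exp (-(I t)) * (-(t * κm t)))) t := by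
    intro t
    exact (hdb t).mul (((hIderiv t).neg).exp)
  have hGmono : MonotoneOn (fun t => -(db t * Real.exp (-(I t)))) (Set.Ici 0) := by
    apply aux_monoOn (f' := fun t =>
      -(κm t * b t * Real.exp (-(I t)) + db t * (Real.exp (-(I t)) * (-(t * κm t)))))
      (convex_Ici 0) (fun t => (hG t).neg)
    intro x hx
    rw [interior_Ici] at hx
    have hx0 : (0:ℝ) ≤ x := le_of_lt hx
    have h1 : b x ≤ x * db x := hbd x hx0
    have h2 : 0 ≤ κm x := hκpos x
    have h3 : 0 < Real.exp (-(I x)) := Real.exp_pos _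
    nlinarith [mul_le_mul_of_nonneg_left h1 h2]
  have hGle : ∀ t, 0 ≤ t → db t * Real.exp (-(I t)) ≤ 1 := by
    intro t ht
    have := hGmono (Set.self_mem_Ici) (Set.mem_Ici.mpr ht) ht
    have hI0 : I 0 = 0 := by simp [hIdef]
    simp only [hI0, neg_zero, Real.exp_zero, mul_one, hdb0] at this
    linarith
  -- Final assembly
  intro t ht
  obtain ⟨ht0, htτ⟩ := ht
  have hdble : db t ≤ Real.exp (I t) := by
    have key := hGle t (le_of_lt ht0)
    have hepos : (0:ℝ) < Real.exp (I t) := Real.exp_pos _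
    have heq : db t = db t * Real.exp (-(I t)) * Real.exp (I t) := by
      rw [mul_assoc, ← Real.exp_add]; simp
    rw [heq]
    calc db t * Real.exp (-(I t)) * Real.exp (I t)
        ≤ 1 * Real.exp (I t) := mul_le_mul_of_nonneg_right key hepos.le
      _ = Real.exp (I t) := one_mul _
  have hII : I t ≤ I τ := by
    have hadd : I t + ∫ u in t..τ, u * κm u = I τ :=
      intervalIntegral.integral_add_adjacent_intervals
        (hIcont.intervalIntegrable 0 t) (hIcont.intervalIntegrable t τ)
    have hnn : 0 ≤ ∫ u in t..τ, u * κm u := by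
      apply intervalIntegral.integral_nonneg htτ
      intro u hu
      have : 0 ≤ u := le_trans (le_of_lt ht0) hu.1
      have := hκpos u
      positivity
    linarith
  have : b t / t ≤ db t := by
    rw [div_le_iff₀ ht0]
    have := hbd t (le_of_lt ht0)
    linarith [hbd t (le_of_lt ht0), mul_comm t (db t)]
  calc b t / t ≤ db t := this
    _ ≤ Real.exp (I t) := hdble
    _ ≤ Real.exp (I τ) := Real.exp_le_exp.mpr hII
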